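/- Let Δ ⊂ ℝ^d be a d-dimensional lattice polytope. Then Δ^{FI} = {0} if and only if both Δ and [Δ*] (the convex hull of the lattice points of the polar polytope Δ*) contain 0 in their interiors. -/

import Mathlib

open Finset Pointwise MeasureTheory
noncomputable section

variable {d : ℕ}

/-- Standard pairing on ℝ^d. -/
def pairR (x y : Fin d → ℝ) : ℝ := ∑ i, x i * y i

/-- Embedding of ℤ^d into ℝ^d. -/
def toR (n : Fin d → ℤ) : Fin d → ℝ := fun i => (n i : ℝ)

/-- A point of ℝ^d with integer coordinates. -/
def IsLatticePoint (x : Fin d → ℝ) : Prop := ∀ i, ∃ z : ℤ, x i = (z : ℝ)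

/-- ord_Δ(y) = min_{x ∈ Δ} ⟨x, y⟩. -/
def ordP (Δ : Set (Fin d → ℝ)) (y : Fin d → ℝ) : ℝ := sInf ((fun x => pairR x y) '' Δ)

/-- The Fine interior of Δ. -/
def fineInterior (Δ : Set (Fin d → ℝ)) : Set (Fin d → ℝ) :=
  {x | ∀ n : Fin d → ℤ, n ≠ 0 → ordP Δ (toR n) + 1 ≤ pairR x (toR n)}

/-- A lattice polytope: the convex hull of finitely many lattice points. -/
def IsLatticePolytope (Δ : Set (Fin d → ℝ)) : Prop :=
  ∃ S : Finset (Fin d → ℤ), Δ = convexHull ℝ (toR '' (S : Set (Fin d → ℤ)))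

/-- The polar set Δ* = {y : ⟨x,y⟩ ≥ -1 for all x ∈ Δ}. -/
def polarSet (Δ : Set (Fin d → ℝ)) : Set (Fin d → ℝ) :=
  {y | ∀ x ∈ Δ, -1 ≤ pairR x y}

/-- [P] = convex hull of the lattice points of P. -/
def latticeHull (P : Set (Fin d → ℝ)) : Set (Fin d → ℝ) :=
  convexHull ℝ {x ∈ P | IsLatticePoint x}

/-- Pseudoreflexive polytope: Fine interior {0} and Δ = [[Δ*]*]. -/
def IsPseudoreflexive (Δ : Set (Fin d → ℝ)) : Prop :=
  IsLatticePolytope Δ ∧ fineInterior Δ = {0} ∧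
    Δ = latticeHull (polarSet (latticeHull (polarSet Δ)))

/-- (Exposed) face of Δ cut out by a supporting linear functional. -/
def IsFaceOf (Δ F : Set (Fin d → ℝ)) : Prop :=
  ∃ y : Fin d → ℝ, F = {x ∈ Δ | pairR x y = ordP Δ y}

/-- Dimension of a subset of ℝ^d. -/
def dimSet (S : Set (Fin d → ℝ)) : ℕ := Module.finrank ℝ ↥(vectorSpan ℝ S)

/-- The face of the polar polytope dual to a face F of Δ. -/
def dualFace (Δ F : Set (Fin d → ℝ)) : Set (Fin d → ℝ) :=
  {y ∈ polarSet Δ | ∀ x ∈ F, pairR x y = -1}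

/-- The cone ℝ_{≥0}·Θ over a set Θ. -/
def coneOver (Θ : Set (Fin d → ℝ)) : Set (Fin d → ℝ) :=
  {x | ∃ c : ℝ, 0 ≤ c ∧ ∃ p ∈ Θ, x = c • p}

/-- A face Θ is ordinary if every lattice point of ℝ_{≥0}Θ lies in some dilate lΘ. -/
def IsOrdinaryFace (Θ : Set (Fin d → ℝ)) : Prop :=
  ∀ n : Fin d → ℤ, toR n ∈ coneOver Θ → ∃ l : ℕ, toR n ∈ (l : ℝ) • Θ

/-- Facet: a face of dimension d-1. -/
def IsFacet (Δ Θ : Set (Fin d → ℝ)) : Prop :=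
  IsFaceOf Δ Θ ∧ dimSet Θ + 1 = d

namespace Stmt5

lemma pairR_comm (x y : Fin d → ℝ) : pairR x y = pairR y x := by
  simp [pairR, mul_comm]

lemma pairR_smul_left (c : ℝ) (x y : Fin d → ℝ) : pairR (c • x) y = c * pairR x y := by
  simp [pairR, Finset.mul_sum, mul_assoc]

lemma pairR_add_left (x x' y : Fin d → ℝ) : pairR (x + x') y = pairR x y + pairR x' y := by
  simp [pairR, add_mul, Finset.sum_add_distrib]

@[simp] lemma pairR_zero_left (y : Fin d → ℝ) : pairR 0 y = 0 := by simp [pairR]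
@[simp] lemma pairR_zero_right (x : Fin d → ℝ) : pairR x 0 = 0 := by simp [pairR]

lemma pairR_neg_right (x y : Fin d → ℝ) : pairR x (-y) = -pairR x y := by
  simp [pairR, Finset.sum_neg_distrib]

lemma pairR_self_pos {x : Fin d → ℝ} (hx : x ≠ 0) : 0 < pairR x x := by
  obtain ⟨i, hi⟩ := Function.ne_iff.mp hx
  refine Finset.sum_pos' (fun j _ => mul_self_nonneg _) ⟨i, Finset.mem_univ i, ?_⟩
  exact mul_self_pos.mpr (by simpa using hi)

lemma abs_pairR_le {x y : Fin d → ℝ} {M : ℝ} (hM : ∀ i, |y i| ≤ M) :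
    |pairR x y| ≤ (∑ i, |x i|) * M := by
  calc |pairR x y| ≤ ∑ i, |x i * y i| := Finset.abs_sum_le_sum_abs _ _
    _ ≤ ∑ i, |x i| * M := by
        refine Finset.sum_le_sum fun i _ => ?_
        rw [abs_mul]
        exact mul_le_mul_of_nonneg_left (hM i) (abs_nonneg _)
    _ = (∑ i, |x i|) * M := by rw [Finset.sum_mul]

lemma pair_halfspace_convex (y : Fin d → ℝ) (c : ℝ) : Convex ℝ {x : Fin d → ℝ | c ≤ pairR x y} := by
  intro a ha b hb p q hp hq hpq
  simp only [Set.mem_setOf_eq] at *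
  have h : pairR (p • a + q • b) y = p * pairR a y + q * pairR b y := by
    rw [pairR_add_left, pairR_smul_left, pairR_smul_left]
  rw [h]
  have hc : c = p * c + q * c := by rw [← add_mul, hpq, one_mul]
  have h1 := mul_le_mul_of_nonneg_left ha hp
  have h2 := mul_le_mul_of_nonneg_left hb hq
  linarith


section Ord

variable {S : Finset (Fin d → ℤ)}

lemma mem_hull (s : Fin d → ℤ) (hs : s ∈ S) :
    toR s ∈ convexHull ℝ (toR '' (S : Set (Fin d → ℤ))) :=
  subset_convexHull ℝ _ ⟨s, hs, rfl⟩

lemma inf'_le_pair (hS : S.Nonempty) (y : Fin d → ℝ) :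
    ∀ x ∈ convexHull ℝ (toR '' (S : Set (Fin d → ℤ))),
      S.inf' hS (fun s => pairR (toR s) y) ≤ pairR x y := by
  intro x hx
  refine convexHull_min ?_ (pair_halfspace_convex y _) hx
  rintro _ ⟨s, hs, rfl⟩
  exact Finset.inf'_le (f := fun s => pairR (toR s) y) (Finset.mem_coe.mp hs)

lemma ord_eq_inf' (hS : S.Nonempty) (y : Fin d → ℝ) :
    ordP (convexHull ℝ (toR '' (S : Set (Fin d → ℤ)))) y
      = S.inf' hS (fun s => pairR (toR s) y) := by
  obtain ⟨s0, hs0, he⟩ := Finset.exists_mem_eq_inf' hS (fun s => pairR (toR s) y)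
  apply le_antisymm
  · apply csInf_le
    · refine ⟨S.inf' hS (fun s => pairR (toR s) y), ?_⟩
      rintro r ⟨x, hx, hr⟩
      subst hr
      exact inf'_le_pair hS y x hx
    · exact ⟨toR s0, mem_hull s0 hs0, he.symm⟩
  · apply le_csInf
    · exact ⟨_, ⟨toR s0, mem_hull s0 hs0, rfl⟩⟩
    · rintro _ ⟨x, hx, rfl⟩
      exact inf'_le_pair hS y x hx

lemma ord_le_pair (hS : S.Nonempty) (y : Fin d → ℝ) {x : Fin d → ℝ}
    (hx : x ∈ convexHull ℝ (toR '' (S : Set (Fin d → ℤ)))) :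
    ordP (convexHull ℝ (toR '' (S : Set (Fin d → ℤ)))) y ≤ pairR x y := by
  rw [ord_eq_inf' hS]
  exact inf'_le_pair hS y x hx

lemma ord_attained (hS : S.Nonempty) (n : Fin d → ℤ) :
    ∃ z : ℤ, (∃ s ∈ S, (∑ i, s i * n i) = z) ∧
      ordP (convexHull ℝ (toR '' (S : Set (Fin d → ℤ)))) (toR n) = (z : ℝ) := by
  obtain ⟨s0, hs0, he⟩ := Finset.exists_mem_eq_inf' hS (fun s => pairR (toR s) (toR n))
  refine ⟨∑ i, s0 i * n i, ⟨s0, hs0, rfl⟩, ?_⟩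
  rw [ord_eq_inf' hS, he]
  simp only [pairR, toR]
  push_cast
  rfl

end Ord

lemma flin_eq (f : (Fin d → ℝ) →ₗ[ℝ] ℝ) (x : Fin d → ℝ) :
    f x = pairR x (fun i => f (fun j => if i = j then 1 else 0)) := by
  conv_lhs => rw [pi_eq_sum_univ x, map_sum]
  simp only [_root_.map_smul, smul_eq_mul]
  rfl

lemma vec_ne_zero_of_f {f : (Fin d → ℝ) →ₗ[ℝ] ℝ} {a : Fin d → ℝ} (ha : f a ≠ 0) :
    (fun i => f (fun j => if i = j then 1 else 0)) ≠ (0 : Fin d → ℝ) := by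
  intro h0
  apply ha
  rw [flin_eq f a, h0, pairR_zero_right]

/-- Separation: if `0` is not in the interior of a convex set `C` (either with nonempty
interior, or containing `0`), there is a nonzero `v` with `⟨x, v⟩ ≤ 0` on `C`. -/
lemma exists_sep {C : Set (Fin d → ℝ)} (hC : Convex ℝ C)
    (hni : (0 : Fin d → ℝ) ∉ interior C)
    (h0 : (0 : Fin d → ℝ) ∈ C ∨ (interior C).Nonempty) :
    ∃ v : Fin d → ℝ, v ≠ 0 ∧ ∀ x ∈ C, pairR x v ≤ 0 := by
  by_cases hint : (interior C).Nonempty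
  · obtain ⟨a, ha⟩ := hint
    obtain ⟨f, hf⟩ := geometric_hahn_banach_open_point hC.interior isOpen_interior hni
    have hf0 : f (0 : Fin d → ℝ) = 0 := map_zero f
    have hfa : f a < 0 := hf0 ▸ hf a ha
    have hC' : ∀ x ∈ C, f x ≤ 0 := by
      intro x hx
      by_contra hpos
      push_neg at hpos
      set A : ℝ := |f a - f x| with hA
      have hApos : (0:ℝ) < A + 1 := by positivity
      set t : ℝ := min 1 (f x / (2 * (A + 1))) with ht
      have ht0 : 0 < t := lt_min one_pos (by positivity)
      have ht1 : t ≤ 1 := min_le_left _ _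
      have hmem : x + t • (a - x) ∈ interior C :=
        hC.add_smul_sub_mem_interior hx ha ⟨ht0, ht1⟩
      have hval : f x + t * (f a - f x) < 0 := by
        have := hf _ hmem
        rw [hf0] at this
        simpa [map_add, _root_.map_smul, smul_eq_mul, map_sub] using this
      have htA : t * A ≤ f x / 2 := by
        have h1 : t ≤ f x / (2 * (A + 1)) := min_le_right _ _
        have h2 : t * A ≤ (f x / (2 * (A + 1))) * A :=
          mul_le_mul_of_nonneg_right h1 (abs_nonneg _)
        have h3 : (f x / (2 * (A + 1))) * A ≤ f x / 2 := by
          rw [div_mul_eq_mul_div, div_le_div_iff₀ (by positivity) (by norm_num)]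
          nlinarith [abs_nonneg (f a - f x)]
        linarith
      have : t * (f a - f x) ≥ -(t * A) := by
        have := neg_abs_le (f a - f x)
        nlinarith [ht0.le]
      linarith
    set v : Fin d → ℝ := fun i => f.toLinearMap (fun j => if i = j then 1 else 0) with hv
    refine ⟨v, vec_ne_zero_of_f (f := f.toLinearMap) (a := a) (by exact hfa.ne), ?_⟩
    intro x hx
    rw [← flin_eq f.toLinearMap x]
    exact hC' x hx
  · have h0C : (0 : Fin d → ℝ) ∈ C := h0.resolve_right hint
    have hspan : ¬ affineSpan ℝ C = ⊤ := by
      intro htop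
      exact hint (hC.interior_nonempty_iff_affineSpan_eq_top.mpr htop)
    have hvs : vectorSpan ℝ C ≠ ⊤ := by
      intro htop
      exact hspan ((AffineSubspace.affineSpan_eq_top_iff_vectorSpan_eq_top_of_nonempty ℝ (Fin d → ℝ)
        (Fin d → ℝ) ⟨0, h0C⟩).mpr htop)
    obtain ⟨f, hfne, hfbot⟩ := Submodule.exists_dual_map_eq_bot_of_lt_top
      (lt_top_iff_ne_top.mpr hvs) inferInstance
    have hCv : ∀ x ∈ C, x ∈ vectorSpan ℝ C := by
      intro x hx
      have := vsub_mem_vectorSpan ℝ hx h0C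
      simpa [vsub_eq_sub] using this
    have hC0 : ∀ x ∈ C, f x = 0 := by
      intro x hx
      have : f x ∈ Submodule.map f (vectorSpan ℝ C) := ⟨x, hCv x hx, rfl⟩
      rw [hfbot] at this
      simpa using this
    have hfa : ∃ a, f a ≠ 0 := by
      by_contra hall
      push_neg at hall
      exact hfne (LinearMap.ext fun a => by simp [hall a])
    obtain ⟨a, ha⟩ := hfa
    refine ⟨_, vec_ne_zero_of_f (f := f) (a := a) ha, ?_⟩
    intro x hx
    rw [← flin_eq f x, hC0 x hx]

lemma ball_subset_of_interior {C : Set (Fin d → ℝ)} (h : (0 : Fin d → ℝ) ∈ interior C) :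
    ∃ ρ : ℝ, 0 < ρ ∧ ∀ z : Fin d → ℝ, (∀ i, |z i| < ρ) → z ∈ C := by
  rw [mem_interior_iff_mem_nhds, Metric.mem_nhds_iff] at h
  obtain ⟨ε, hε, hball⟩ := h
  refine ⟨ε, hε, fun z hz => ?_⟩
  apply hball
  rw [Metric.mem_ball, dist_zero_right]
  exact pi_norm_lt_iff hε |>.mpr fun i => by simpa [Real.norm_eq_abs] using hz i

lemma dirichlet (v : Fin d → ℝ) (N : ℕ) (hN : 0 < N) :
    ∃ k : ℕ, 0 < k ∧ ∃ n : Fin d → ℤ, ∀ i, |(k : ℝ) * v i - (n i : ℝ)| < 1 / N := by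
  have hNR : (0:ℝ) < N := by exact_mod_cast hN
  have hfl : ∀ (a : ℝ), (⌊(N:ℝ) * Int.fract a⌋).toNat < N := by
    intro a
    rw [Int.toNat_lt' hN]
    refine Int.floor_lt.mpr ?_
    calc (N:ℝ) * Int.fract a < N * 1 := by
          exact mul_lt_mul_of_pos_left (Int.fract_lt_one a) hNR
      _ = ((N:ℤ):ℝ) := by push_cast; ring
  set g : Fin (N ^ d + 1) → (Fin d → Fin N) := fun k i =>
    ⟨(⌊(N:ℝ) * Int.fract ((k : ℕ) * v i)⌋).toNat, hfl _⟩ with hg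
  have hcard : Fintype.card (Fin d → Fin N) < Fintype.card (Fin (N ^ d + 1)) := by
    simp [Fintype.card_fun]
  obtain ⟨k1, k2, hne, heq⟩ := Fintype.exists_ne_map_eq_of_card_lt g hcard
  wlog hlt : (k1 : ℕ) < (k2 : ℕ) generalizing k1 k2
  · exact this k2 k1 hne.symm heq.symm (by omega)
  refine ⟨(k2 : ℕ) - (k1 : ℕ), by omega,
    fun i => ⌊((k2 : ℕ) : ℝ) * v i⌋ - ⌊((k1 : ℕ) : ℝ) * v i⌋, fun i => ?_⟩
  have hfloor : ⌊(N:ℝ) * Int.fract (((k2 : ℕ) : ℝ) * v i)⌋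
      = ⌊(N:ℝ) * Int.fract (((k1 : ℕ) : ℝ) * v i)⌋ := by
    have h2 : (g k1 i : ℕ) = (g k2 i : ℕ) := by rw [heq]
    simp only [hg] at h2
    have e1 := Int.toNat_of_nonneg (Int.floor_nonneg.mpr
      (mul_nonneg hNR.le (Int.fract_nonneg (((k1 : ℕ) : ℝ) * v i))))
    have e2 := Int.toNat_of_nonneg (Int.floor_nonneg.mpr
      (mul_nonneg hNR.le (Int.fract_nonneg (((k2 : ℕ) : ℝ) * v i))))
    omega
  have habs := Int.abs_sub_lt_one_of_floor_eq_floor hfloor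
  have hkey : ((((k2:ℕ) - (k1:ℕ) : ℕ)) : ℝ) * v i
      - ((⌊((k2 : ℕ) : ℝ) * v i⌋ - ⌊((k1 : ℕ) : ℝ) * v i⌋ : ℤ) : ℝ)
      = Int.fract (((k2 : ℕ) : ℝ) * v i) - Int.fract (((k1 : ℕ) : ℝ) * v i) := by
    rw [Nat.cast_sub hlt.le]
    unfold Int.fract
    push_cast
    ring
  beta_reduce
  rw [hkey]
  rw [abs_sub_lt_iff] at habs ⊢
  constructor
  · rw [lt_div_iff₀ hNR]
    nlinarith [habs.1]
  · rw [lt_div_iff₀ hNR]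
    nlinarith [habs.2]

/-- If a box of radius `ρ` around `0` is in the hull, then `ord` of any nonzero integer
direction is at most `-(ρ/2) * M` where `M` is the max coordinate. -/
lemma ord_le_of_ball {S : Finset (Fin d → ℤ)} (hS : S.Nonempty) {ρ : ℝ} (hρ : 0 < ρ)
    (hball : ∀ z : Fin d → ℝ, (∀ i, |z i| < ρ) → z ∈ convexHull ℝ (toR '' (S : Set (Fin d → ℤ))))
    {n : Fin d → ℤ} (hn : n ≠ 0) :
    ∃ M : ℝ, 1 ≤ M ∧ (∀ i, |(n i : ℝ)| ≤ M) ∧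
      ordP (convexHull ℝ (toR '' (S : Set (Fin d → ℤ)))) (toR n) ≤ -(ρ / 2) * M := by
  obtain ⟨iw, hiw⟩ := Function.ne_iff.mp hn
  have hiw' : n iw ≠ 0 := by simpa using hiw
  obtain ⟨i0, _, hi0⟩ := Finset.exists_max_image Finset.univ (fun i => |n i|)
    ⟨iw, Finset.mem_univ iw⟩
  set M : ℝ := ((|n i0| : ℤ) : ℝ) with hM
  have hM1 : (1:ℝ) ≤ M := by
    have h1 : (1:ℤ) ≤ |n i0| := by
      have h := hi0 iw (Finset.mem_univ iw)
      have h2 := abs_pos.mpr hiw'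
      omega
    rw [hM]
    exact_mod_cast h1
  have hMb : ∀ i, |(n i : ℝ)| ≤ M := by
    intro i
    have := hi0 i (Finset.mem_univ i)
    rw [hM]
    push_cast
    exact_mod_cast this
  have hM0 : (0:ℝ) < M := lt_of_lt_of_le one_pos hM1
  set z : Fin d → ℝ := (-(ρ / 2) / M) • toR n with hz
  have hzmem : z ∈ convexHull ℝ (toR '' (S : Set (Fin d → ℤ))) := by
    apply hball
    intro i
    have : |z i| = (ρ / 2) / M * |(n i : ℝ)| := by
      rw [hz]
      simp only [Pi.smul_apply, smul_eq_mul, abs_mul]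
      have he : |(-(ρ / 2) / M)| = (ρ / 2) / M := by
        rw [abs_div, abs_neg, abs_of_pos (by positivity : (0:ℝ) < ρ / 2), abs_of_pos hM0]
      rw [he]
      rfl
    rw [this]
    calc (ρ / 2) / M * |(n i : ℝ)| ≤ (ρ / 2) / M * M := by
          exact mul_le_mul_of_nonneg_left (hMb i) (by positivity)
      _ = ρ / 2 := by field_simp
      _ < ρ := by linarith
  have hsum : M ^ 2 ≤ ∑ i, (n i : ℝ) * (n i : ℝ) := by
    have h1 : M ^ 2 = (n i0 : ℝ) * (n i0 : ℝ) := by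
      rw [hM]
      push_cast
      rw [sq_abs, sq]
    rw [h1]
    exact Finset.single_le_sum (f := fun i => (n i : ℝ) * (n i : ℝ))
      (fun i _ => mul_self_nonneg _) (Finset.mem_univ i0)
  have hpz : pairR z (toR n) ≤ -(ρ / 2) * M := by
    rw [hz, pairR_smul_left]
    have : pairR (toR n) (toR n) ≥ M ^ 2 := hsum
    calc -(ρ / 2) / M * pairR (toR n) (toR n) ≤ -(ρ / 2) / M * M ^ 2 := by
          have ha : -(ρ / 2) / M ≤ 0 :=
            div_nonpos_iff.mpr (Or.inr ⟨by linarith, hM0.le⟩)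
          exact mul_le_mul_of_nonpos_left hsum ha
      _ = -(ρ / 2) * M := by field_simp
  exact ⟨M, hM1, hMb, le_trans (ord_le_pair hS (toR n) hzmem) hpz⟩

/-- Core of the Dirichlet argument: if ord is at most `-1` in every nonzero integer direction,
then every nonzero real direction admits a point of the polytope pairing negatively. -/
lemma exists_neg_pair {S : Finset (Fin d → ℤ)} (hS : S.Nonempty)
    (hord : ∀ n : Fin d → ℤ, n ≠ 0 →
      ordP (convexHull ℝ (toR '' (S : Set (Fin d → ℤ)))) (toR n) ≤ -1)
    {v : Fin d → ℝ} (hv : v ≠ 0) :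
    ∃ x ∈ convexHull ℝ (toR '' (S : Set (Fin d → ℤ))), pairR x v < 0 := by
  obtain ⟨i0, hi0⟩ := Function.ne_iff.mp hv
  have hvi0 : |v i0| > 0 := by simpa [abs_pos] using hi0
  set B : ℝ := ∑ s ∈ S, ∑ i, |(s i : ℝ)| with hB
  have hB0 : 0 ≤ B :=
    Finset.sum_nonneg fun s _ => Finset.sum_nonneg fun i _ => abs_nonneg _
  obtain ⟨N, hN⟩ := exists_nat_gt (max B (1 / |v i0|))
  have hNB : B < N := lt_of_le_of_lt (le_max_left _ _) hN
  have hNv : 1 / |v i0| < N := lt_of_le_of_lt (le_max_right _ _) hN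
  have hNpos : 0 < N := by
    by_contra h
    push_neg at h
    interval_cases N
    simp only [Nat.cast_zero] at hNB
    linarith [one_div_pos.mpr hvi0]
  have hNR : (0:ℝ) < N := by exact_mod_cast hNpos
  obtain ⟨k, hk, n, hkn⟩ := dirichlet v N hNpos
  have hkR : (1:ℝ) ≤ k := by exact_mod_cast hk
  have hnne : n ≠ 0 := by
    intro h0
    have := hkn i0
    rw [h0] at this
    simp only [Pi.zero_apply, Int.cast_zero, sub_zero, abs_mul, Nat.abs_cast] at this
    have h1 : |v i0| ≤ (k:ℝ) * |v i0| := le_mul_of_one_le_left (abs_nonneg _) hkR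
    have h2 : 1 / (N:ℝ) < |v i0| := by
      rw [div_lt_iff₀ hNR]
      rw [div_lt_iff₀ hvi0] at hNv
      linarith [mul_comm ((N:ℝ)) (|v i0|)]
    linarith
  obtain ⟨z, ⟨s0, hs0, hz⟩, hordz⟩ := ord_attained hS n
  have hordn := hord n hnne
  rw [hordz] at hordn
  have hzB : pairR (toR s0) (toR n) ≤ -1 := by
    have : pairR (toR s0) (toR n) = (z : ℝ) := by
      simp only [pairR, toR]
      rw [← hz]
      push_cast
      rfl
    rw [this]
    exact hordn
  refine ⟨toR s0, mem_hull s0 hs0, ?_⟩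
  -- k * pairR (toR s0) v = pairR s0 n + pairR s0 (k•v - n) ≤ -1 + B/N < 0
  have hs0B : ∑ i, |(s0 i : ℝ)| ≤ B := by
    rw [hB]
    exact Finset.single_le_sum
      (f := fun s => ∑ i, |(s i : ℝ)|)
      (fun s _ => Finset.sum_nonneg fun i _ => abs_nonneg _) hs0
  have hsplit : (k:ℝ) * pairR (toR s0) v
      = pairR (toR s0) (toR n) + ∑ i, (s0 i : ℝ) * ((k:ℝ) * v i - (n i : ℝ)) := by
    simp only [pairR, toR, Finset.mul_sum, ← Finset.sum_add_distrib]
    congr 1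
    funext i
    ring
  have herr : |∑ i, (s0 i : ℝ) * ((k:ℝ) * v i - (n i : ℝ))| ≤ (∑ i, |(s0 i : ℝ)|) * (1 / N) := by
    calc |∑ i, (s0 i : ℝ) * ((k:ℝ) * v i - (n i : ℝ))|
        ≤ ∑ i, |(s0 i : ℝ) * ((k:ℝ) * v i - (n i : ℝ))| := Finset.abs_sum_le_sum_abs _ _
      _ ≤ ∑ i, |(s0 i : ℝ)| * (1 / N) := by
          refine Finset.sum_le_sum fun i _ => ?_
          rw [abs_mul]
          exact mul_le_mul_of_nonneg_left (hkn i).le (abs_nonneg _)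
      _ = (∑ i, |(s0 i : ℝ)|) * (1 / N) := by rw [Finset.sum_mul]
  have hBN : (∑ i, |(s0 i : ℝ)|) * (1 / N) < 1 := by
    rw [mul_one_div, div_lt_one hNR]
    linarith
  have hneg : (k:ℝ) * pairR (toR s0) v < 0 := by
    rw [hsplit]
    have := (abs_le.mp herr).2
    linarith
  by_contra hge
  push_neg at hge
  nlinarith

lemma neg_one_le_ord {S : Finset (Fin d → ℤ)} (hS : S.Nonempty) {w : Fin d → ℝ}
    (hw : w ∈ polarSet (convexHull ℝ (toR '' (S : Set (Fin d → ℤ))))) :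
    -1 ≤ ordP (convexHull ℝ (toR '' (S : Set (Fin d → ℤ)))) w := by
  obtain ⟨s0, hs0⟩ := hS
  refine le_csInf ⟨pairR (toR s0) w, ⟨toR s0, mem_hull s0 hs0, rfl⟩⟩ ?_
  rintro _ ⟨p, hp, rfl⟩
  exact hw p hp

lemma ord_le_neg_one {S : Finset (Fin d → ℤ)} (hS : S.Nonempty)
    (h0 : (0 : Fin d → ℝ) ∈ interior (convexHull ℝ (toR '' (S : Set (Fin d → ℤ)))))
    {n : Fin d → ℤ} (hn : n ≠ 0) :
    ordP (convexHull ℝ (toR '' (S : Set (Fin d → ℤ)))) (toR n) ≤ -1 := by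
  obtain ⟨ρ, hρ, hball⟩ := ball_subset_of_interior h0
  obtain ⟨M, hM1, -, hle⟩ := ord_le_of_ball hS hρ hball hn
  obtain ⟨z, -, hz⟩ := ord_attained hS n
  have hzlt : (z:ℝ) < 0 := by
    rw [← hz]
    calc ordP _ (toR n) ≤ -(ρ / 2) * M := hle
      _ < 0 := by nlinarith
  have hz1 : z ≤ -1 := by
    have : z < 0 := by exact_mod_cast hzlt
    omega
  rw [hz]
  exact_mod_cast hz1

end Stmt5


open Stmt5 in
/-- Δ^{FI} = {0} iff both Δ and [Δ*] contain 0 in their interiors. -/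
theorem stmt5 {d : ℕ} (Δ : Set (Fin d → ℝ)) (h1 : IsLatticePolytope Δ)
    (h2 : (interior Δ).Nonempty) :
    fineInterior Δ = {0} ↔
      ((0 : Fin d → ℝ) ∈ interior Δ ∧
        (0 : Fin d → ℝ) ∈ interior (latticeHull (polarSet Δ))) := by
  obtain ⟨S, rfl⟩ := h1
  set Δ := convexHull ℝ (toR '' (S : Set (Fin d → ℤ))) with hΔ
  have hS : S.Nonempty := by
    rcases S.eq_empty_or_nonempty with h | h
    · exfalso
      rw [hΔ, h] at h2
      simp only [Finset.coe_empty, Set.image_empty, convexHull_empty,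
        interior_empty] at h2
      exact Set.not_nonempty_empty h2
    · exact h
  have hΔconv : Convex ℝ Δ := convex_convexHull ℝ _
  have h0hull : (0 : Fin d → ℝ) ∈ latticeHull (polarSet Δ) := by
    apply subset_convexHull ℝ _
    refine ⟨fun x _ => ?_, fun i => ⟨0, by simp⟩⟩
    rw [pairR_zero_right]
    norm_num
  constructor
  · -- forward
    intro h
    have h0fi : (0 : Fin d → ℝ) ∈ fineInterior Δ := by rw [h]; rfl
    have hord : ∀ n : Fin d → ℤ, n ≠ 0 → ordP Δ (toR n) ≤ -1 := by
      intro n hn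
      have hx := h0fi n hn
      rw [pairR_zero_left] at hx
      linarith
    have h0i : (0 : Fin d → ℝ) ∈ interior Δ := by
      by_contra hni
      obtain ⟨v, hv, hle⟩ := exists_sep hΔconv hni (Or.inr h2)
      obtain ⟨x, hx, hneg⟩ := exists_neg_pair hS hord (v := -v) (neg_ne_zero.mpr hv)
      rw [pairR_neg_right] at hneg
      linarith [hle x hx]
    refine ⟨h0i, ?_⟩
    by_contra hni
    obtain ⟨v, hv, hle⟩ := exists_sep (convex_convexHull ℝ _) hni (Or.inl h0hull)
    set u : Fin d → ℝ := -v with hu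
    have hune : u ≠ 0 := neg_ne_zero.mpr hv
    have hlat : ∀ n : Fin d → ℤ, toR n ∈ polarSet Δ → 0 ≤ pairR u (toR n) := by
      intro n hn
      have hmem : toR n ∈ latticeHull (polarSet Δ) :=
        subset_convexHull ℝ _ ⟨hn, fun i => ⟨n i, rfl⟩⟩
      have h1 := hle _ hmem
      rw [pairR_comm, hu, pairR_neg_right]
      linarith
    obtain ⟨ρ, hρ, hball⟩ := ball_subset_of_interior h0i
    set A : ℝ := ∑ i, |u i| with hA
    have hA0 : 0 ≤ A := Finset.sum_nonneg fun i _ => abs_nonneg _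
    set t : ℝ := ρ / (4 * (A + 1)) with htdef
    have ht : 0 < t := by positivity
    have hmemfi : t • u ∈ fineInterior Δ := by
      intro n hn
      obtain ⟨z, -, hz⟩ := ord_attained hS n
      have hzle : (z:ℝ) ≤ -1 := by rw [← hz]; exact hord n hn
      have hz1 : z ≤ -1 := by exact_mod_cast hzle
      have hpair_smul : pairR (t • u) (toR n) = t * pairR u (toR n) :=
        pairR_smul_left t u (toR n)
      rcases eq_or_lt_of_le hz1 with hzeq | hzlt
      · -- ord = -1 : lattice point of the polar set
        have hpol : toR n ∈ polarSet Δ := by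
          intro x hx
          have hop := ord_le_pair hS (toR n) hx
          rw [hz, hzeq] at hop
          push_cast at hop
          linarith
        have h0le := hlat n hpol
        rw [hz, hzeq, hpair_smul]
        push_cast
        nlinarith [ht.le]
      · -- ord ≤ -2
        have hz2 : (z:ℝ) ≤ -2 := by exact_mod_cast (by omega : z ≤ -2)
        obtain ⟨M, hM1, hMb, hordle⟩ := ord_le_of_ball hS hρ hball hn
        have habs : |pairR u (toR n)| ≤ A * M := abs_pairR_le hMb
        rw [hz] at hordle
        rw [hz, hpair_smul]
        have hlb : -(A * M) ≤ pairR u (toR n) := neg_le_of_abs_le habs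
        have htA : t * (A + 1) = ρ / 4 := by
          rw [htdef]; field_simp
        have e1 : t * (-(A * M)) ≤ t * pairR u (toR n) :=
          mul_le_mul_of_nonneg_left hlb ht.le
        have e2 : t * A ≤ ρ / 4 := by nlinarith
        have e3 : t * A * M ≤ ρ / 4 * M :=
          mul_le_mul_of_nonneg_right e2 (by linarith)
        have e4 : ρ / 4 * M ≤ -(z:ℝ) / 2 := by linarith
        have e5 : t * (-(A * M)) = -(t * A * M) := by ring
        linarith
    rw [h, Set.mem_singleton_iff] at hmemfi
    rcases smul_eq_zero.mp hmemfi with h' | h'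
    · exact absurd h' ht.ne'
    · exact hune h'
  · -- backward
    rintro ⟨h0i, h0p⟩
    have hord : ∀ n : Fin d → ℤ, n ≠ 0 → ordP Δ (toR n) ≤ -1 :=
      fun n hn => ord_le_neg_one hS h0i hn
    ext x
    simp only [Set.mem_singleton_iff]
    constructor
    · intro hx
      by_contra hx0
      have hHull : ∀ y ∈ latticeHull (polarSet Δ), 0 ≤ pairR y x := by
        intro y hy
        refine convexHull_min ?_ (pair_halfspace_convex x 0) hy
        rintro w ⟨hwpol, hwlat⟩
        choose nz hnz using hwlat
        have hw : w = toR nz := funext fun i => hnz i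
        by_cases hn0 : nz = 0
        · rw [Set.mem_setOf_eq, hw, hn0]
          have : toR (0 : Fin d → ℤ) = (0 : Fin d → ℝ) := by
            funext i; simp [toR]
          rw [this, pairR_zero_left]
        · have hfi := hx nz hn0
          have hwo : -1 ≤ ordP Δ (toR nz) := by
            rw [← hw]
            exact neg_one_le_ord hS hwpol
          rw [Set.mem_setOf_eq, hw, pairR_comm]
          linarith
      obtain ⟨ε, hε, hball2⟩ := ball_subset_of_interior h0p
      set c : ℝ := ε / (2 * ((∑ i, |x i|) + 1)) with hc
      have hsx : 0 ≤ ∑ i, |x i| := Finset.sum_nonneg fun i _ => abs_nonneg _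
      have hcpos : 0 < c := by positivity
      have hmemb : (-c) • x ∈ latticeHull (polarSet Δ) := by
        apply hball2
        intro i
        have h1 : |((-c) • x) i| = c * |x i| := by
          simp only [Pi.smul_apply, smul_eq_mul, abs_mul, abs_neg,
            abs_of_pos hcpos]
        rw [h1]
        have h2 : |x i| ≤ ∑ j, |x j| :=
          Finset.single_le_sum (f := fun j => |x j|)
            (fun j _ => abs_nonneg _) (Finset.mem_univ i)
        have h3 : c * |x i| ≤ c * (∑ j, |x j|) :=
          mul_le_mul_of_nonneg_left h2 hcpos.le
        have h4 : c * ((∑ j, |x j|) + 1) = ε / 2 := by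
          rw [hc]; field_simp
        nlinarith
      have hge := hHull _ hmemb
      rw [pairR_smul_left] at hge
      nlinarith [pairR_self_pos hx0]
    · rintro rfl
      intro n hn
      rw [pairR_zero_left]
      linarith [hord n hn]
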